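/- Let d ≥ 1, let η : ℝ^d → ℝ be continuous, suppose that S := {x ∈ ℝ^d : η(x) = 1/2} is non-empty, and suppose that for some ε > 0 the function η is continuously differentiable on the open set S + B_ε(0) with gradient ∇η(x₀) ≠ 0 for every x₀ ∈ S. Then the ε-neighbourhood of S admits the normal representation S + B_ε(0) = { x₀ + t·∇η(x₀)/‖∇η(x₀)‖ : x₀ ∈ S, |t| < ε }. -/

import Mathlib

open MeasureTheory Pointwise

noncomputable section

theorem stmt0 (d : ℕ) (hd : 1 ≤ d) (η : EuclideanSpace ℝ (Fin d) → ℝ)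
    (hcont : Continuous η)
    (S : Set (EuclideanSpace ℝ (Fin d)))
    (hS : S = {x | η x = 1/2}) (hSne : S.Nonempty)
    (ε : ℝ) (hε : 0 < ε)
    (hdiff : ContDiffOn ℝ 1 η (S + Metric.ball (0 : EuclideanSpace ℝ (Fin d)) ε))
    (hgrad : ∀ x₀ ∈ S, gradient η x₀ ≠ 0) :
    S + Metric.ball (0 : EuclideanSpace ℝ (Fin d)) ε =
      {x | ∃ x₀ ∈ S, ∃ t : ℝ, |t| < ε ∧
        x = x₀ + t • (‖gradient η x₀‖⁻¹ • gradient η x₀)} := by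
  set U : Set (EuclideanSpace ℝ (Fin d)) := S + Metric.ball (0 : EuclideanSpace ℝ (Fin d)) ε with hU
  have hUopen : IsOpen U := IsOpen.add_left Metric.isOpen_ball
  have hSsubU : S ⊆ U := by
    intro s hs
    exact Set.mem_add.mpr ⟨s, hs, 0, by simpa using hε, add_zero s⟩
  have hSclosed : IsClosed S := by
    rw [hS]
    exact isClosed_eq hcont continuous_const
  ext x
  constructor
  · intro hx
    obtain ⟨x₀, hx₀, u, hu, hxu⟩ := Set.mem_add.mp hx
    -- nearest point
    obtain ⟨x₁, hx₁S, hinf⟩ := hSclosed.exists_infDist_eq_dist hSne x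
    have hdistlt : dist x x₁ < ε := by
      rw [← hinf]
      calc Metric.infDist x S ≤ dist x x₀ := Metric.infDist_le_dist_of_mem hx₀
        _ < ε := by
          rw [← hxu]
          simpa [dist_eq_norm] using mem_ball_zero_iff.mp hu
    -- Lagrange multipliers
    set g : EuclideanSpace ℝ (Fin d) := gradient η x₁ with hg
    have hgne : g ≠ 0 := hgrad x₁ hx₁S
    have hx₁U : U ∈ nhds x₁ := hUopen.mem_nhds (hSsubU hx₁S)
    have hdiffat : ContDiffAt ℝ 1 η x₁ := (hdiff.contDiffAt hx₁U)
    have hη' : HasStrictFDerivAt η (fderiv ℝ η x₁) x₁ := hdiffat.hasStrictFDerivAt one_ne_zero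
    have hgradf : HasGradientAt η g x₁ := hη'.hasFDerivAt.differentiableAt.hasGradientAt
    have hfderiv : ∀ v : EuclideanSpace ℝ (Fin d), fderiv ℝ η x₁ v = @inner ℝ (EuclideanSpace ℝ (Fin d)) _ g v := by
      intro v
      have := (hasGradientAt_iff_hasFDerivAt.mp hgradf).fderiv
      rw [this]
      simp [InnerProductSpace.toDual_apply_apply]
    set φ : EuclideanSpace ℝ (Fin d) → ℝ := fun y => @inner ℝ (EuclideanSpace ℝ (Fin d)) _ (y - x) (y - x) with hφ
    have hid : HasStrictFDerivAt (fun y : EuclideanSpace ℝ (Fin d) => y - x) (ContinuousLinearMap.id ℝ (EuclideanSpace ℝ (Fin d))) x₁ :=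
      (hasStrictFDerivAt_id x₁).sub_const x
    have hφ' : HasStrictFDerivAt φ
        ((fderivInnerCLM ℝ (x₁ - x, x₁ - x)).comp
          ((ContinuousLinearMap.id ℝ (EuclideanSpace ℝ (Fin d))).prod (ContinuousLinearMap.id ℝ (EuclideanSpace ℝ (Fin d))))) x₁ :=
      hid.inner ℝ hid
    have hextr : IsLocalExtrOn φ {y | η y = η x₁} x₁ := by
      have hSeq : {y | η y = η x₁} = S := by
        have : η x₁ = 1/2 := by rw [hS] at hx₁S; exact hx₁S
        rw [hS, this]
      rw [hSeq]
      refine Or.inl (IsMinOn.localize ?_)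
      intro y hy
      have h1 : dist x x₁ ≤ dist x y := hinf ▸ Metric.infDist_le_dist_of_mem hy
      have h2 : ‖x₁ - x‖ ≤ ‖y - x‖ := by
        simpa [dist_eq_norm, norm_sub_rev] using h1
      simp only [Set.mem_setOf_eq, φ, real_inner_self_eq_norm_sq]
      exact pow_le_pow_left₀ (norm_nonneg _) h2 2
    obtain ⟨a, b, hab, hsum⟩ :=
      hextr.exists_multipliers_of_hasStrictFDerivAt_1d hη' hφ'
    -- derive vector equation
    have hvec : a • g + (2 * b) • (x₁ - x) = 0 := by
      apply ext_inner_right (𝕜 := ℝ)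
      intro v
      have := congrArg (fun L : EuclideanSpace ℝ (Fin d) →L[ℝ] ℝ => L v) hsum
      simp only [ContinuousLinearMap.add_apply, ContinuousLinearMap.coe_smul',
        Pi.smul_apply, ContinuousLinearMap.comp_apply, ContinuousLinearMap.prod_apply,
        ContinuousLinearMap.id_apply, fderivInnerCLM_apply, ContinuousLinearMap.zero_apply,
        smul_eq_mul] at this
      rw [hfderiv v] at this
      rw [inner_add_left, inner_smul_left, inner_smul_left, inner_zero_left]
      have hsym : @inner ℝ (EuclideanSpace ℝ (Fin d)) _ v (x₁ - x) = @inner ℝ (EuclideanSpace ℝ (Fin d)) _ (x₁ - x) v := real_inner_comm _ _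
      simp only [RCLike.star_def, conj_trivial]
      rw [hsym] at this
      ring_nf
      ring_nf at this
      linarith [this]
    have hbne : b ≠ 0 := by
      intro hb
      apply hgrad x₁ hx₁S
      rw [hb] at hvec hab
      have ha : a ≠ 0 := by simpa using hab
      have : a • g = 0 := by simpa using hvec
      have := smul_eq_zero.mp this
      tauto
    have hxsub : x - x₁ = (a / (2 * b)) • g := by
      have h2b : (2 * b) ≠ 0 := by simpa using hbne
      have : (2 * b) • (x - x₁) = a • g := by
        have h := hvec
        rw [show x₁ - x = -(x - x₁) by abel, smul_neg, add_neg_eq_zero] at h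
        exact h.symm
      calc x - x₁ = (2 * b)⁻¹ • ((2 * b) • (x - x₁)) := by
            rw [inv_smul_smul₀ h2b]
        _ = (2 * b)⁻¹ • (a • g) := by rw [this]
        _ = (a / (2 * b)) • g := by rw [smul_smul, inv_mul_eq_div]
    set c : ℝ := a / (2 * b)
    refine ⟨x₁, hx₁S, c * ‖g‖, ?_, ?_⟩
    · have : |c * ‖g‖| = ‖c • g‖ := by
        rw [norm_smul, abs_mul, abs_norm, Real.norm_eq_abs]
      rw [this, ← hxsub]
      simpa [dist_eq_norm, norm_sub_rev] using hdistlt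
    · have hgn : ‖g‖ ≠ 0 := norm_ne_zero_iff.mpr hgne
      rw [← hg]
      rw [smul_smul]
      rw [show c * ‖g‖ * ‖g‖⁻¹ = c by field_simp]
      rw [← hxsub]
      abel
  · rintro ⟨x₀, hx₀, t, ht, rfl⟩
    have hgne : gradient η x₀ ≠ 0 := hgrad x₀ hx₀
    have hgn : ‖gradient η x₀‖ ≠ 0 := norm_ne_zero_iff.mpr hgne
    refine Set.mem_add.mpr ⟨x₀, hx₀, _, ?_, rfl⟩
    rw [mem_ball_zero_iff, norm_smul, norm_smul, norm_inv, norm_norm]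
    rw [inv_mul_cancel₀ hgn]
    simpa using ht
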